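/- A CLDUI matrix X parametrized by (A,B) (i.e. X = Σ_{i,j} A_{ij}|ij⟩⟨ij| + Σ_{i≠j} B_{ij}|ii⟩⟨jj|) is unitary if and only if B is unitary and |A_{ij}| = 1 for all i ≠ j. -/

import Mathlib

open Matrix

/-- The LDOI matrix `X^{(3)}_{(A,B,C)} = Σ_{i,j} A_{ij}|ij⟩⟨ij| + Σ_{i≠j} B_{ij}|ii⟩⟨jj|
  + Σ_{i≠j} C_{ij}|ij⟩⟨ji|`. -/
def X3 {d : ℕ} {R : Type*} [CommRing R] (A B C : Matrix (Fin d) (Fin d) R) :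
    Matrix (Fin d × Fin d) (Fin d × Fin d) R :=
  Matrix.of fun p q =>
    (if p.1 = q.1 ∧ p.2 = q.2 then A p.1 p.2 else 0) +
    (if p.1 = p.2 ∧ q.1 = q.2 ∧ p.1 ≠ q.1 then B p.1 q.1 else 0) +
    (if p.1 = q.2 ∧ p.2 = q.1 ∧ p.1 ≠ p.2 then C p.1 p.2 else 0)

/-- The realignment `(X^R)_{ij,kl} = X_{ik,jl}`. -/
def realign {d : ℕ} {R : Type*} [CommRing R]
    (X : Matrix (Fin d × Fin d) (Fin d × Fin d) R) :
    Matrix (Fin d × Fin d) (Fin d × Fin d) R :=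
  Matrix.of fun p q => X (p.1, q.1) (p.2, q.2)

/-- The partial transpose `(X^Γ)_{ij,kl} = X_{il,kj}`. -/
def ptrans {d : ℕ} {R : Type*} [CommRing R]
    (X : Matrix (Fin d × Fin d) (Fin d × Fin d) R) :
    Matrix (Fin d × Fin d) (Fin d × Fin d) R :=
  Matrix.of fun p q => X (p.1, q.2) (q.1, p.2)

/-- The triple (A,B,C) has equal diagonals. -/
def EqDiag {d : ℕ} {R : Type*} [CommRing R] (A B C : Matrix (Fin d) (Fin d) R) : Prop :=
  ∀ i, A i i = B i i ∧ B i i = C i i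

/-- unitarity characterization of CLDUI matrices `X^{(2)}_{(A,B)}`
(the LDOI matrix with `C = diag(A)`). -/
lemma X_entry {d : ℕ} (A B : Matrix (Fin d) (Fin d) ℂ) (hdiag : ∀ i, A i i = B i i)
    (p q : Fin d × Fin d) :
    X3 A B (Matrix.diagonal fun i => A i i) p q =
      if p.1 = p.2 ∧ q.1 = q.2 then B p.1 q.1
      else if p = q then A p.1 p.2 else 0 := by
  obtain ⟨i, j⟩ := p
  obtain ⟨k, l⟩ := q
  simp only [X3, Matrix.of_apply]
  have h3 : (if i = l ∧ j = k ∧ i ≠ j then (Matrix.diagonal fun i => A i i) i j else 0) = 0 := by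
    split_ifs with h
    · exact Matrix.diagonal_apply_ne _ h.2.2
    · rfl
  rw [h3, add_zero]
  by_cases hij : i = j
  · subst hij
    by_cases hkl : k = l
    · subst hkl
      by_cases hik : i = k
      · subst hik; simp [hdiag i]
      · simp [hik, Ne.symm hik]
    · have h : ¬ ((i, i) = (k, l)) := by
        simp only [Prod.mk.injEq, not_and]; rintro rfl; exact hkl
      have h2 : ¬ (i = k ∧ i = l) := by rintro ⟨rfl, rfl⟩; exact hkl rfl
      simp [hkl, h, h2]
  · by_cases hq : (i, j) = (k, l)
    · rw [Prod.mk.injEq] at hq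
      obtain ⟨rfl, rfl⟩ := hq
      simp [hij]
    · rw [Prod.mk.injEq] at hq
      simp [hij, hq, Prod.mk.injEq]

-- diagonal block entries
lemma XXh_diag {d : ℕ} (A B : Matrix (Fin d) (Fin d) ℂ) (hdiag : ∀ i, A i i = B i i)
    (i m : Fin d) :
    (X3 A B (Matrix.diagonal fun i => A i i) *
      (X3 A B (Matrix.diagonal fun i => A i i))ᴴ) (i, i) (m, m) = (B * Bᴴ) i m := by
  set X := X3 A B (Matrix.diagonal fun i => A i i) with hX
  have hE : ∀ (n : Fin d) (r : Fin d × Fin d), X (n, n) r = if r.1 = r.2 then B n r.1 else 0 := by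
    intro n r
    rw [hX, X_entry A B hdiag]
    rcases r with ⟨k, l⟩
    by_cases hkl : k = l
    · subst hkl; simp
    · have : ¬ ((n, n) = (k, l)) := by
        simp only [Prod.mk.injEq, not_and]; rintro rfl; exact hkl
      simp [hkl, this]
  simp only [Matrix.mul_apply, Matrix.conjTranspose_apply, hE]
  rw [Fintype.sum_prod_type]
  have : ∀ k : Fin d, (∑ l : Fin d, (if k = l then B i k else 0) *
      star (if k = l then B m k else 0)) = B i k * star (B m k) := by
    intro k
    rw [Finset.sum_eq_single k]
    · simp
    · intro l _ hl; simp [Ne.symm hl]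
    · simp
  simp only [this]

lemma X_offdiag_entry {d : ℕ} (A B : Matrix (Fin d) (Fin d) ℂ) (hdiag : ∀ i, A i i = B i i)
    {i j : Fin d} (hij : i ≠ j) (r : Fin d × Fin d) :
    X3 A B (Matrix.diagonal fun i => A i i) (i, j) r = if r = (i, j) then A i j else 0 := by
  rw [X_entry A B hdiag]
  simp only [hij, false_and, if_false]
  by_cases h : (i, j) = r
  · subst h; simp
  · simp [h, Ne.symm h]

lemma XXh_offdiag {d : ℕ} (A B : Matrix (Fin d) (Fin d) ℂ) (hdiag : ∀ i, A i i = B i i)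
    {i j : Fin d} (hij : i ≠ j) (q : Fin d × Fin d) :
    (X3 A B (Matrix.diagonal fun i => A i i) *
      (X3 A B (Matrix.diagonal fun i => A i i))ᴴ) (i, j) q =
      if q = (i, j) then A i j * star (A i j) else 0 := by
  simp only [Matrix.mul_apply, Matrix.conjTranspose_apply]
  rw [Finset.sum_eq_single ((i, j) : Fin d × Fin d)]
  · rw [X_offdiag_entry A B hdiag hij, if_pos rfl]
    by_cases hq : q = (i, j)
    · subst hq; rw [X_offdiag_entry A B hdiag hij, if_pos rfl, if_pos rfl]
    · rw [if_neg hq]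
      rcases q with ⟨m, n⟩
      rw [X_entry A B hdiag]
      simp only [hij]
      have h1 : ¬ (m = n ∧ i = j) := by rintro ⟨-, h⟩; exact hij h
      have h2 : ¬ ((m, n) = (i, j)) := hq
      simp [h1, h2]
  · intro r _ hr
    rw [X_offdiag_entry A B hdiag hij, if_neg hr, zero_mul]
  · simp

theorem stmt_8 {d : ℕ} (A B : Matrix (Fin d) (Fin d) ℂ)
    (hdiag : ∀ i, A i i = B i i) :
    X3 A B (Matrix.diagonal fun i => A i i) ∈ Matrix.unitaryGroup (Fin d × Fin d) ℂ ↔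
      (B ∈ Matrix.unitaryGroup (Fin d) ℂ ∧
       ∀ i j : Fin d, i ≠ j → ‖A i j‖ = 1) := by
  rw [Matrix.mem_unitaryGroup_iff, Matrix.star_eq_conjTranspose]
  constructor
  · intro h
    constructor
    · rw [Matrix.mem_unitaryGroup_iff, Matrix.star_eq_conjTranspose]
      ext i m
      have h1 : (X3 A B (Matrix.diagonal fun i => A i i) *
          (X3 A B (Matrix.diagonal fun i => A i i))ᴴ) (i, i) (m, m) =
          (1 : Matrix (Fin d × Fin d) (Fin d × Fin d) ℂ) (i, i) (m, m) := by rw [h]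
      rw [XXh_diag A B hdiag] at h1
      rw [h1]
      by_cases him : i = m
      · subst him; simp
      · have : ¬ ((i, i) = (m, m)) := by simp [Prod.ext_iff, him]
        rw [Matrix.one_apply_ne this, Matrix.one_apply_ne him]
    · intro i j hij
      have h1 : (X3 A B (Matrix.diagonal fun i => A i i) *
          (X3 A B (Matrix.diagonal fun i => A i i))ᴴ) (i, j) (i, j) =
          (1 : Matrix (Fin d × Fin d) (Fin d × Fin d) ℂ) (i, j) (i, j) := by rw [h]
      rw [XXh_offdiag A B hdiag hij, if_pos rfl, Matrix.one_apply_eq] at h1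
      have h2 : (Complex.normSq (A i j) : ℂ) = 1 := by
        rw [← Complex.mul_conj]; exact h1
      have h3 : Complex.normSq (A i j) = 1 := by exact_mod_cast h2
      have h4 : ‖A i j‖ ^ 2 = 1 := by rw [Complex.sq_norm, h3]
      nlinarith [norm_nonneg (A i j)]
  · rintro ⟨hB, hA⟩
    rw [Matrix.mem_unitaryGroup_iff, Matrix.star_eq_conjTranspose] at hB
    ext ⟨i, j⟩ ⟨k, l⟩
    by_cases hij : i = j
    · subst hij
      by_cases hkl : k = l
      · subst hkl
        rw [XXh_diag A B hdiag, hB]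
        by_cases hik : i = k
        · subst hik; simp
        · have : ¬ ((i, i) = (k, k)) := by simp [Prod.ext_iff, hik]
          rw [Matrix.one_apply_ne this, Matrix.one_apply_ne hik]
      · have hher := (Matrix.isHermitian_mul_conjTranspose_self
          (X3 A B (Matrix.diagonal fun i => A i i))).apply (i, i) (k, l)
        rw [← hher, XXh_offdiag A B hdiag hkl]
        have h1 : ¬ ((i, i) = (k, l)) := by
          simp only [Prod.mk.injEq, not_and]; rintro rfl; exact hkl
        have h2 : ¬ (((i, i) : Fin d × Fin d) = (k, l)) := h1
        rw [if_neg h1, star_zero, Matrix.one_apply_ne h2]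
    · rw [XXh_offdiag A B hdiag hij]
      by_cases h : ((k, l) : Fin d × Fin d) = (i, j)
      · rw [if_pos h, h, Matrix.one_apply_eq, Complex.star_def, Complex.mul_conj]
        have := hA i j hij
        rw [← Complex.sq_norm, this]
        norm_num
      · rw [if_neg h, Matrix.one_apply_ne (Ne.symm h)]
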